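/- Let A be a finite-dimensional real vector space equipped with a bilinear, commutative, associative multiplication · possessing a two-sided identity element e (e·x = x for all x), and let B be a nondegenerate symmetric bilinear form on A satisfying the invariance condition B(x·y, z) = B(y, x·z) for all x, y, z. Suppose N ⊆ A is a subspace such that A is the (internal) direct sum of the line ℝ·e and N. Then the subspace Z = { x ∈ A : n·x = 0 for all n ∈ N } has dimension at most one. -/

import Mathlib

/-- The subspace `Z = { x : A | n·x = 0 for all n ∈ N }` of elements annihilated by a
subspace `N` under a bilinear multiplication. -/
def annihilatedBy {A : Type*} [AddCommGroup A] [Module ℝ A]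
    (mul : A →ₗ[ℝ] A →ₗ[ℝ] A) (N : Submodule ℝ A) : Submodule ℝ A where
  carrier := { x : A | ∀ n ∈ N, mul n x = 0 }
  add_mem' := by
    intro a b ha hb n hn
    simp [map_add, ha n hn, hb n hn]
  zero_mem' := by
    intro n hn
    simp
  smul_mem' := by
    intro c a ha n hn
    simp [ha n hn]

/-- Let `A` be a finite-dimensional real commutative associative
algebra with identity `e`, endowed with a nondegenerate symmetric invariant bilinear
form `B`, and let `N` be a subspace with `A = ℝ·e ⊕ N`.  Then the "most nilpotent
subspace" `Z = { x | n·x = 0 for all n ∈ N }` has dimension at most one. -/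
theorem most_nilpotent_subspace_dim_le_one
    {A : Type*} [AddCommGroup A] [Module ℝ A] [FiniteDimensional ℝ A]
    (mul : A →ₗ[ℝ] A →ₗ[ℝ] A)
    (hcomm : ∀ x y : A, mul x y = mul y x)
    (hassoc : ∀ x y z : A, mul x (mul y z) = mul (mul x y) z)
    (e : A) (hid : ∀ x : A, mul e x = x)
    (B : A →ₗ[ℝ] A →ₗ[ℝ] ℝ)
    (hBsymm : ∀ x y : A, B x y = B y x)
    (hBinv : ∀ x y z : A, B (mul x y) z = B y (mul x z))
    (hBnondeg : ∀ x : A, (∀ y : A, B x y = 0) → x = 0)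
    (N : Submodule ℝ A)
    (hds : IsCompl (Submodule.span ℝ {e}) N) :
    Module.finrank ℝ (annihilatedBy mul N) ≤ 1 := by
  set Z := annihilatedBy mul N
  let f : Z →ₗ[ℝ] ℝ := (B e).comp Z.subtype
  have hinj : Function.Injective f := by
    rw [← LinearMap.ker_eq_bot, LinearMap.ker_eq_bot']
    intro ⟨x, hx⟩ hfx
    have hBex : B e x = 0 := hfx
    have hx0 : x = 0 := by
      apply hBnondeg
      intro y
      obtain ⟨u, n, hu, hn, huv⟩ :=
        Submodule.codisjoint_iff_exists_add_eq.mp hds.codisjoint y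
      obtain ⟨c, rfl⟩ := Submodule.mem_span_singleton.mp hu
      have hxn : B x n = 0 := by
        have h1 : B (mul n x) e = B x (mul n e) := hBinv n x e
        have h2 : mul n x = 0 := hx n hn
        have h3 : mul n e = n := by rw [hcomm]; exact hid n
        rw [h2, h3] at h1
        simpa using h1.symm
      have hxe : B x e = 0 := by rw [hBsymm]; exact hBex
      rw [← huv]
      simp [map_add, map_smul, hxe, hxn]
    exact Subtype.ext hx0
  calc Module.finrank ℝ Z ≤ Module.finrank ℝ ℝ :=
        LinearMap.finrank_le_finrank_of_injective hinj
    _ = 1 := Module.finrank_self ℝ
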